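/- arXiv:2006.12960 — 2 statements merged into one kernel-verified Lean document; each statement's English description precedes it below -/
import Mathlib

section
/- Let P be a lattice polygon, σ = cone(P×{1}), S = σ^∨ ∩ (M⊕ℤ) with primitive generators a¹,…,aⁿ of σ, R* = (0,1), and for k ≥ 2 define span_ℤ K^{kR*}_{i,i+1} where K^{R}_{i,i+1} = {r ∈ S : ⟨a^i,r⟩ < ⟨a^i,R⟩ and ⟨a^{i+1},r⟩ < ⟨a^{i+1},R⟩}. Then span_ℤ K^{kR*}_{i,i+1} equals the full lattice M ⊕ ℤ when ℓ(d^i) < k, and equals span_ℤ( (M⊕ℤ) ∩ (a^i)^⊥ ∩ (a^{i+1})^⊥, R* ) when ℓ(d^i) ≥ k, where d^i is the edge of P between the vertices corresponding to a^i and a^{i+1}. -/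
lemma perp_int (a b x y : ℤ) (hco : Int.gcd a b = 1) (h : x * a + y * b = 0) :
    ∃ t : ℤ, x = -(t * b) ∧ y = t * a := by
  rcases eq_or_ne a 0 with ha | ha
  · subst ha
    have hb : b = 1 ∨ b = -1 := by
      have := hco; simp [Int.gcd] at this
      rcases Int.natAbs_eq b with hb | hb <;> omega
    refine ⟨-(x * b), ?_, ?_⟩
    · rcases hb with hb | hb <;> subst hb <;> ring
    · have : y * b = 0 := by linarith
      rcases hb with hb | hb <;> subst hb <;> simp_all
  · have hdvd : a ∣ y := by
      have hmul : a ∣ y * b := ⟨-x, by linarith⟩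
      have hcp : IsCoprime a b := Int.isCoprime_iff_gcd_eq_one.mpr hco
      exact hcp.dvd_of_dvd_mul_right hmul
    obtain ⟨t, rfl⟩ := hdvd
    refine ⟨t, ?_, by ring⟩
    have : x * a = -(t * b) * a := by ring_nf; linarith
    exact mul_right_cancel₀ ha this

/-- Pairing of `aʲ = (vʲ,1)` with `r = (c,m) ∈ M ⊕ ℤ`: `⟨aʲ,r⟩ = ⟨vʲ,c⟩ + m`. -/
def pairA {n : ℕ} (v : ZMod n → (Fin 2 → ℤ)) (j : ZMod n)
    (r : (Fin 2 → ℤ) × ℤ) : ℤ :=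
  (∑ t, v j t * r.1 t) + r.2

/-- eq. `eq spanzz`: for a lattice polygon with cyclically ordered
vertices `vʲ` (each edge `vʲv^{j+1}` supported by a functional that is minimal exactly
on its two endpoints), `S = σ^∨ ∩ (M⊕ℤ)`, `aʲ = (vʲ,1)`, `R* = (0,1)` and `k ≥ 2`:
the set `K^{kR*}_{i,i+1} = {r ∈ S : ⟨aⁱ,r⟩ < k, ⟨a^{i+1},r⟩ < k}` spans the full lattice
`M ⊕ ℤ` when the lattice length `ℓ(dⁱ)` of the edge `dⁱ = v^{i+1} − vⁱ` satisfies
`ℓ(dⁱ) < k`, and spans `span_ℤ((M⊕ℤ) ∩ (aⁱ)^⊥ ∩ (a^{i+1})^⊥, R*)` when `ℓ(dⁱ) ≥ k`. -/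
theorem stmt16 (n : ℕ) (hn : 3 ≤ n) (v : ZMod n → (Fin 2 → ℤ)) (k : ℕ) (hk : 2 ≤ k)
    (i : ZMod n)
    (hdistinct : ∀ j j' : ZMod n, j ≠ j' → v j ≠ v j')
    (hedge : ∀ j : ZMod n, ∃ c : Fin 2 → ℤ,
      (∑ t, v j t * c t) = (∑ t, v (j + 1) t * c t)
      ∧ (∀ j', (∑ t, v j t * c t) ≤ ∑ t, v j' t * c t)
      ∧ (∀ j', j' ≠ j → j' ≠ j + 1 → (∑ t, v j t * c t) < ∑ t, v j' t * c t)) :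
    (Int.gcd (v (i + 1) 0 - v i 0) (v (i + 1) 1 - v i 1) < k →
      Submodule.span ℤ
        {r : (Fin 2 → ℤ) × ℤ | (∀ j, 0 ≤ pairA v j r)
          ∧ pairA v i r < k ∧ pairA v (i + 1) r < k} = ⊤)
    ∧ (k ≤ Int.gcd (v (i + 1) 0 - v i 0) (v (i + 1) 1 - v i 1) →
      Submodule.span ℤ
        {r : (Fin 2 → ℤ) × ℤ | (∀ j, 0 ≤ pairA v j r)
          ∧ pairA v i r < k ∧ pairA v (i + 1) r < k}
      = Submodule.span ℤ
        ({r : (Fin 2 → ℤ) × ℤ | pairA v i r = 0 ∧ pairA v (i + 1) r = 0}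
          ∪ {((0 : Fin 2 → ℤ), (1 : ℤ))})) := by
  haveI : NeZero n := ⟨by omega⟩
  set K : Set ((Fin 2 → ℤ) × ℤ) := {r : (Fin 2 → ℤ) × ℤ | (∀ j, 0 ≤ pairA v j r)
          ∧ pairA v i r < k ∧ pairA v (i + 1) r < k} with hKdef
  have hpair : ∀ (j : ZMod n) (r : (Fin 2 → ℤ) × ℤ),
      pairA v j r = v j 0 * r.1 0 + v j 1 * r.1 1 + r.2 := by
    intro j r; simp [pairA, Fin.sum_univ_two]
  have h1 : (1 : ZMod n) ≠ 0 := by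
    intro h
    have h1' : ((1 : ℕ) : ZMod n) = 0 := by exact_mod_cast h
    have hd := (ZMod.natCast_eq_zero_iff 1 n).mp h1'
    have := Nat.le_of_dvd one_pos hd
    omega
  have h2 : (2 : ZMod n) ≠ 0 := by
    intro h
    have h2' : ((2 : ℕ) : ZMod n) = 0 := by exact_mod_cast h
    have hd := (ZMod.natCast_eq_zero_iff 2 n).mp h2'
    have := Nat.le_of_dvd two_pos hd
    omega
  have hii1 : i ≠ i + 1 := fun h => h1 (left_eq_add.mp h)
  have hi2i : i + 2 ≠ i := fun h => h2 (add_eq_left.mp h)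
  have hi2i1 : i + 2 ≠ i + 1 := by
    intro h
    have h21 : (2 : ZMod n) = 1 := add_left_cancel h
    rw [← one_add_one_eq_two] at h21
    exact h1 (add_eq_left.mp h21)
  -- edge vector and gcd
  have hvne : v i ≠ v (i + 1) := hdistinct i (i+1) hii1
  have hdne : ¬ ((v (i+1) 0 - v i 0) = 0 ∧ (v (i+1) 1 - v i 1) = 0) := by
    rintro ⟨e0, e1⟩
    apply hvne
    funext t; fin_cases t
    · exact (sub_eq_zero.mp e0).symm
    · exact (sub_eq_zero.mp e1).symm
  have hgpos : 0 < Int.gcd (v (i+1) 0 - v i 0) (v (i+1) 1 - v i 1) := by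
    rw [Int.gcd_pos_iff]
    by_contra hc
    push_neg at hc
    exact hdne ⟨hc.1, hc.2⟩
  set g : ℤ := (Int.gcd (v (i+1) 0 - v i 0) (v (i+1) 1 - v i 1) : ℤ) with hgdef
  have hgz : 0 < g := by rw [hgdef]; exact_mod_cast hgpos
  set d'0 : ℤ := (v (i+1) 0 - v i 0) / g with hd'0def
  set d'1 : ℤ := (v (i+1) 1 - v i 1) / g with hd'1def
  have he0 : v (i+1) 0 - v i 0 = d'0 * g :=
    (Int.ediv_mul_cancel (Int.gcd_dvd_left _ _)).symm
  have he1 : v (i+1) 1 - v i 1 = d'1 * g :=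
    (Int.ediv_mul_cancel (Int.gcd_dvd_right _ _)).symm
  have hcop : Int.gcd d'0 d'1 = 1 := Int.gcd_div_gcd_div_gcd hgpos
  -- the primitive perpendicular vector u
  set u : (Fin 2 → ℤ) × ℤ :=
    (![-d'1, d'0], -(v i 0 * (-d'1) + v i 1 * d'0)) with hudef
  have hu0 : u.1 0 = -d'1 := rfl
  have hu1 : u.1 1 = d'0 := by simp [hudef]
  have hpu : ∀ j, pairA v j u = (v j 0 - v i 0) * (-d'1) + (v j 1 - v i 1) * d'0 := by
    intro j; rw [hpair, hu0, hu1]; simp [hudef]; ring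
  have hpui : pairA v i u = 0 := by rw [hpu]; ring
  have hpui1 : pairA v (i+1) u = 0 := by
    rw [hpu]; linear_combination (-d'1) * he0 + d'0 * he1
  -- linearity of pairA in r
  have hlin : ∀ (j : ZMod n) (t : ℤ) (r : (Fin 2 → ℤ) × ℤ),
      pairA v j (t • r) = t * pairA v j r := by
    intro j t r
    rw [hpair, hpair]
    simp [Prod.smul_fst, Prod.smul_snd, Pi.smul_apply, smul_eq_mul]
    ring
  have hadd : ∀ (j : ZMod n) (r r' : (Fin 2 → ℤ) × ℤ),
      pairA v j (r + r') = pairA v j r + pairA v j r' := by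
    intro j r r'
    rw [hpair, hpair, hpair]
    simp [Prod.fst_add, Prod.snd_add, Pi.add_apply]
    ring
  -- edge supporting functional
  obtain ⟨ce, hceq, hcemin, hcestrict⟩ := hedge i
  have hsum : ∀ j, (∑ t, v j t * ce t) = v j 0 * ce 0 + v j 1 * ce 1 := by
    intro j; simp [Fin.sum_univ_two]
  have hdce : (v (i+1) 0 - v i 0) * ce 0 + (v (i+1) 1 - v i 1) * ce 1 = 0 := by
    have := hceq; rw [hsum, hsum] at this; linarith
  have hd'ce : ce 0 * d'0 + ce 1 * d'1 = 0 := by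
    have hmul : g * (ce 0 * d'0 + ce 1 * d'1) = g * 0 := by
      rw [mul_zero]; linear_combination hdce - ce 0 * he0 - ce 1 * he1
    exact mul_left_cancel₀ (ne_of_gt hgz) hmul
  obtain ⟨s, hs0, hs1⟩ := perp_int d'0 d'1 (ce 0) (ce 1) hcop hd'ce
  have hsne : s ≠ 0 := by
    intro h
    subst h
    simp only [zero_mul, neg_zero] at hs0 hs1
    have := hcestrict (i+2) hi2i hi2i1
    rw [hsum, hsum, hs0, hs1] at this
    simp at this
  have hs_pair : ∀ j, 0 ≤ s * pairA v j u := by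
    intro j
    have hmin := hcemin j
    rw [hsum, hsum] at hmin
    have heq : s * pairA v j u
        = (v j 0 * ce 0 + v j 1 * ce 1) - (v i 0 * ce 0 + v i 1 * ce 1) := by
      rw [hpu, hs0, hs1]; ring
    rw [heq]; linarith
  set t₀ : ℤ := if 0 < s then 1 else -1 with ht₀def
  have hkpos : (1 : ℤ) < (k : ℤ) := by exact_mod_cast (by omega : 1 < k)
  have hr0K : t₀ • u ∈ K := by
    refine ⟨fun j => ?_, ?_, ?_⟩
    · rw [hlin]
      have hsp := hs_pair j
      by_cases hc : 0 < s
      · simp only [ht₀def, hc, if_true]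
        have := (mul_nonneg_iff_of_pos_left hc).mp hsp
        linarith
      · have hneg : s < 0 := lt_of_le_of_ne (not_lt.mp hc) hsne
        simp only [ht₀def, hc, if_false]
        nlinarith
    · rw [hlin, hpui, mul_zero]; linarith
    · rw [hlin, hpui1, mul_zero]; linarith
  have huspan : u ∈ Submodule.span ℤ K := by
    have hu : u = t₀ • (t₀ • u) := by
      by_cases hc : 0 < s <;> simp [ht₀def, hc]
    rw [hu]
    exact Submodule.smul_mem _ _ (Submodule.subset_span hr0K)
  have h01K : ((0 : Fin 2 → ℤ), (1 : ℤ)) ∈ K := by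
    refine ⟨fun j => ?_, ?_, ?_⟩ <;> rw [hpair] <;> simp <;> linarith
  -- decomposition of perpendicular elements
  have hdec : ∀ r : (Fin 2 → ℤ) × ℤ,
      (v (i+1) 0 - v i 0) * r.1 0 + (v (i+1) 1 - v i 1) * r.1 1 = 0 →
      ∃ t : ℤ, r = t • u + (pairA v i r) • ((0 : Fin 2 → ℤ), (1 : ℤ)) := by
    intro r hr
    have hr' : r.1 0 * d'0 + r.1 1 * d'1 = 0 := by
      have hmul : g * (r.1 0 * d'0 + r.1 1 * d'1) = g * 0 := by
        rw [mul_zero]; linear_combination hr - r.1 0 * he0 - r.1 1 * he1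
      exact mul_left_cancel₀ (ne_of_gt hgz) hmul
    obtain ⟨t, ht0, ht1⟩ := perp_int d'0 d'1 (r.1 0) (r.1 1) hcop hr'
    refine ⟨t, ?_⟩
    have hfst : r.1 = (t • u + (pairA v i r) • ((0 : Fin 2 → ℤ), (1 : ℤ))).1 := by
      funext t'
      fin_cases t' <;>
        simp [Prod.fst_add, Pi.add_apply, Prod.smul_fst, Pi.smul_apply,
          smul_eq_mul, hudef] <;> [linarith [ht0]; linarith [ht1]]
    have hsnd : r.2 = (t • u + (pairA v i r) • ((0 : Fin 2 → ℤ), (1 : ℤ))).2 := by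
      simp [Prod.snd_add, Prod.smul_snd, smul_eq_mul, hudef, hpair]
      linear_combination (-(v i 0)) * ht0 - v i 1 * ht1
    exact Prod.ext hfst hsnd
  constructor
  · -- Part 1 : ℓ(dⁱ) < k, the span is everything
    intro hlt
    have hglt : g < (k : ℤ) := by rw [hgdef]; exact_mod_cast hlt
    set A : ℤ := Int.gcdA d'0 d'1 with hA
    set B : ℤ := Int.gcdB d'0 d'1 with hB
    have hbez : d'0 * A + d'1 * B = 1 := by
      have hb := Int.gcd_eq_gcd_ab d'0 d'1
      rw [hcop] at hb; exact_mod_cast hb.symm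
    set N : ℤ := ∑ j : ZMod n, |(v j 0 - v i 0) * A + (v j 1 - v i 1) * B| with hNdef
    have hN0 : 0 ≤ N := Finset.sum_nonneg fun j _ => abs_nonneg _
    have hNle : ∀ j : ZMod n, -N ≤ (v j 0 - v i 0) * A + (v j 1 - v i 1) * B := by
      intro j
      have h1' : |(v j 0 - v i 0) * A + (v j 1 - v i 1) * B| ≤ N :=
        Finset.single_le_sum (f := fun j => |(v j 0 - v i 0) * A + (v j 1 - v i 1) * B|)
          (fun j _ => abs_nonneg _) (Finset.mem_univ j)
      have h2' := neg_abs_le ((v j 0 - v i 0) * A + (v j 1 - v i 1) * B)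
      linarith
    set r₁ : (Fin 2 → ℤ) × ℤ :=
      (![N * ce 0 + A, N * ce 1 + B],
        -(v i 0 * (N * ce 0 + A) + v i 1 * (N * ce 1 + B))) with hr₁def
    have hpr₁ : ∀ j, pairA v j r₁
        = (v j 0 - v i 0) * (N * ce 0 + A) + (v j 1 - v i 1) * (N * ce 1 + B) := by
      intro j; rw [hpair]; simp [hr₁def]; ring
    have heqg : (v (i+1) 0 - v i 0) * (N * ce 0 + A) + (v (i+1) 1 - v i 1) * (N * ce 1 + B)
        = g := by linear_combination N * hdce + A * he0 + B * he1 + g * hbez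
    have hr₁K : r₁ ∈ K := by
      refine ⟨fun j => ?_, ?_, ?_⟩
      · rw [hpr₁]
        by_cases hji : j = i
        · rw [hji]
          have hz0 : (v i 0 - v i 0) * (N * ce 0 + A) + (v i 1 - v i 1) * (N * ce 1 + B)
              = 0 := by ring
          rw [hz0]
        · by_cases hji1 : j = i + 1
          · rw [hji1, heqg]; linarith
          · have hstr := hcestrict j hji hji1
            rw [hsum, hsum] at hstr
            have h1e : 1 ≤ (v j 0 - v i 0) * ce 0 + (v j 1 - v i 1) * ce 1 := by
              have := Int.add_one_le_iff.mpr hstr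
              linarith
            have hNj := hNle j
            have hmulN : N ≤ N * ((v j 0 - v i 0) * ce 0 + (v j 1 - v i 1) * ce 1) :=
              le_mul_of_one_le_right hN0 h1e
            have hexp : (v j 0 - v i 0) * (N * ce 0 + A) + (v j 1 - v i 1) * (N * ce 1 + B)
                = N * ((v j 0 - v i 0) * ce 0 + (v j 1 - v i 1) * ce 1)
                  + ((v j 0 - v i 0) * A + (v j 1 - v i 1) * B) := by ring
            rw [hexp]
            linarith
      · rw [hpr₁]
        have hz0 : (v i 0 - v i 0) * (N * ce 0 + A) + (v i 1 - v i 1) * (N * ce 1 + B)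
            = 0 := by ring
        rw [hz0]; linarith
      · rw [hpr₁, heqg]; exact hglt
    rw [eq_top_iff]
    rintro r -
    obtain ⟨c, m⟩ := r
    set β : ℤ := c 0 * d'0 + c 1 * d'1 with hβ
    have hperp0 : (c 0 - β * A) * d'0 + (c 1 - β * B) * d'1 = 0 := by
      rw [hβ]; linear_combination (- (c 0 * d'0 + c 1 * d'1)) * hbez
    obtain ⟨α, hα0, hα1⟩ := perp_int d'0 d'1 (c 0 - β * A) (c 1 - β * B) hcop hperp0
    set γ : ℤ := m - ((α - β * N * s) * u.2 + β * r₁.2) with hγ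
    have hmem := Submodule.add_mem _ (Submodule.add_mem _
        (Submodule.smul_mem _ (α - β * N * s) huspan)
        (Submodule.smul_mem _ β (Submodule.subset_span hr₁K)))
      (Submodule.smul_mem _ γ (Submodule.subset_span h01K))
    have heqr : (c, m) = (α - β * N * s) • u + β • r₁ + γ • ((0 : Fin 2 → ℤ), (1 : ℤ)) := by
      refine Prod.ext ?_ ?_
      · funext t'
        fin_cases t' <;>
          simp only [hudef, hr₁def, Prod.fst_add, Pi.add_apply, Prod.smul_fst,
            Pi.smul_apply, smul_eq_mul, Fin.mk_zero, Fin.mk_one,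
            Matrix.cons_val_zero, Matrix.cons_val_one,
            Matrix.head_cons, Pi.zero_apply, mul_zero, add_zero]
        · rw [hs0] at *
          linear_combination hα0
        · rw [hs1] at *
          linear_combination hα1
      · simp only [hγ, Prod.snd_add, Prod.smul_snd, smul_eq_mul, mul_one]
        ring
    rw [heqr]
    exact hmem
  · -- Part 2 : k ≤ ℓ(dⁱ)
    intro hge
    have hgek : (k : ℤ) ≤ g := by rw [hgdef]; exact_mod_cast hge
    apply le_antisymm
    · rw [Submodule.span_le]
      rintro r ⟨hS, hik, hi1k⟩
      simp only [SetLike.mem_coe]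
      set E : ℤ := r.1 0 * d'0 + r.1 1 * d'1 with hE
      have hqp : pairA v (i+1) r - pairA v i r = g * E := by
        rw [hpair, hpair, hE]; linear_combination r.1 0 * he0 + r.1 1 * he1
      have hp0 := hS i
      have hq0 := hS (i+1)
      have hz : E = 0 := by
        by_contra hne
        rcases lt_or_gt_of_ne hne with hlt' | hgt'
        · have hE1 : E ≤ -1 := by omega
          have : g * E ≤ g * (-1) := mul_le_mul_of_nonneg_left hE1 hgz.le
          linarith
        · have hE1 : 1 ≤ E := hgt'
          have : g * 1 ≤ g * E := mul_le_mul_of_nonneg_left hE1 hgz.le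
          linarith
      have hz' : (v (i+1) 0 - v i 0) * r.1 0 + (v (i+1) 1 - v i 1) * r.1 1 = 0 := by
        have hgE : (v (i+1) 0 - v i 0) * r.1 0 + (v (i+1) 1 - v i 1) * r.1 1 = g * E := by
          rw [hE]; linear_combination r.1 0 * he0 + r.1 1 * he1
        rw [hgE, hz, mul_zero]
      obtain ⟨t, hteq⟩ := hdec r hz'
      rw [hteq]
      refine Submodule.add_mem _
        (Submodule.smul_mem _ _ (Submodule.subset_span (Or.inl ⟨hpui, hpui1⟩)))
        (Submodule.smul_mem _ _ (Submodule.subset_span (Or.inr rfl)))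
    · rw [Submodule.span_le]
      rintro r hr
      simp only [SetLike.mem_coe]
      rcases hr with hperp | hsing
      · obtain ⟨hri, hri1⟩ := hperp
        have hz' : (v (i+1) 0 - v i 0) * r.1 0 + (v (i+1) 1 - v i 1) * r.1 1 = 0 := by
          rw [hpair] at hri hri1
          linear_combination hri1 - hri
        obtain ⟨t, hteq⟩ := hdec r hz'
        rw [hteq, hri]
        simp only [zero_smul, add_zero]
        exact Submodule.smul_mem _ _ huspan
      · have hr' : r = ((0 : Fin 2 → ℤ), (1 : ℤ)) := hsing
        rw [hr']
        exact Submodule.subset_span h01K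
end

section
/- Let P be a lattice polygon with n edges of lattice lengths l₁,…,lₙ (edges cyclically ordered, edge vectors d¹,…,dⁿ summing to 0). For k ≥ 2 the dimension of the space V_k = {(t₁,…,tₙ,s) ∈ ℝ^{n+1} : Σᵢ tᵢ dⁱ = 0, and tᵢ = s whenever lᵢ ≤ k−1} satisfies dim V_k − 1 = max(0, #{i : lᵢ ≥ k} − 2) provided the edges {dⁱ : lᵢ ≥ k} span ℝ² whenever there are at least two linearly independent such edges; in particular if no two edges of length ≥ k are parallel and at least two exist, dim T¹ in degree −kR* equals #{i : lᵢ ≥ k} − 2. -/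
open Finset

/- STATEMENT 18: for a lattice polygon with `n` edges of lattice lengths `l₁,…,lₙ`
(nonzero edge vectors `d¹,…,dⁿ` summing to `0`) and `k ≥ 2`, the space
`V_k = {(t₁,…,tₙ,s) : Σᵢ tᵢ dⁱ = 0, tᵢ = s whenever lᵢ ≤ k−1}` satisfies
`dim V_k − 1 = max(0, #{i : lᵢ ≥ k} − 2)`, provided the long edges `{dⁱ : lᵢ ≥ k}`
span `ℝ²` whenever there are at least two of them. -/
open scoped Classical in
theorem stmt18 {n : ℕ} (k : ℕ) (hk : 2 ≤ k)
    (d : Fin n → (Fin 2 → ℝ)) (l : Fin n → ℕ)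
    (hd0 : ∀ i, d i ≠ 0)
    (hclosed : ∀ t, ∑ i, d i t = 0)
    (hspan : 2 ≤ (univ.filter (fun i => k ≤ l i)).card →
      Submodule.span ℝ {x : Fin 2 → ℝ | ∃ i, k ≤ l i ∧ x = d i} = ⊤)
    (V : Submodule ℝ ((Fin n → ℝ) × ℝ))
    (hV : ∀ p : (Fin n → ℝ) × ℝ, p ∈ V ↔
      ((∀ t, ∑ i, p.1 i * d i t = 0) ∧ ∀ i, l i ≤ k - 1 → p.1 i = p.2)) :
    Module.finrank ℝ V - 1 = max 0 ((univ.filter (fun i => k ≤ l i)).card - 2) := by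
  set S : Finset (Fin n) := univ.filter (fun i => k ≤ l i) with hS
  have hmemS : ∀ i, i ∈ S ↔ k ≤ l i := by intro i; simp [hS]
  have hshort : ∀ i : Fin n, l i ≤ k - 1 ↔ i ∉ S := by
    intro i; rw [hmemS]; omega
  set φ : (↥S → ℝ) →ₗ[ℝ] (Fin 2 → ℝ) :=
    { toFun := fun u => ∑ i : ↥S, u i • d i
      map_add' := by intro u v; simp [add_smul, Finset.sum_add_distrib]
      map_smul' := by intro c u; simp [mul_smul, Finset.smul_sum] } with hφ
  have hsum0 : ∑ i, d i = 0 := by funext t; simpa using hclosed t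
  -- membership reformulation
  have hmem : ∀ p : (Fin n → ℝ) × ℝ, p ∈ V ↔
      ((fun i : ↥S => p.1 i - p.2) ∈ LinearMap.ker φ ∧ ∀ i, i ∉ S → p.1 i = p.2) := by
    intro p
    rw [hV]
    constructor
    · rintro ⟨h1, h2⟩
      have h2' : ∀ i, i ∉ S → p.1 i = p.2 := fun i hi => h2 i ((hshort i).mpr hi)
      refine ⟨?_, h2'⟩
      have hs1 : ∑ i, p.1 i • d i = 0 := by
        funext t; simpa using h1 t
      have hs2 : ∑ i, (p.1 i - p.2) • d i = 0 := by
        have : ∑ i, (p.1 i - p.2) • d i = ∑ i, p.1 i • d i - p.2 • ∑ i, d i := by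
          rw [Finset.smul_sum, ← Finset.sum_sub_distrib]
          congr 1; funext i; rw [sub_smul]
        rw [this, hs1, hsum0, smul_zero, sub_zero]
      have hs3 : ∑ i ∈ S, (p.1 i - p.2) • d i = 0 := by
        rw [← hs2]
        refine Finset.sum_subset (Finset.subset_univ S) ?_
        intro i _ hi
        rw [h2' i hi, sub_self, zero_smul]
      simpa [hφ, LinearMap.mem_ker, Finset.sum_attach S (fun i => (p.1 i - p.2) • d i)]
        using hs3
    · rintro ⟨h1, h2⟩
      have hs3 : ∑ i ∈ S, (p.1 i - p.2) • d i = 0 := by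
        have := h1
        simp only [hφ, LinearMap.mem_ker, LinearMap.coe_mk, AddHom.coe_mk] at this
        change ∑ i : ↥S, (p.1 i - p.2) • d i = 0 at this
        rw [Finset.univ_eq_attach] at this
        rwa [Finset.sum_attach S (fun i => (p.1 i - p.2) • d i)] at this
      have hs2 : ∑ i, (p.1 i - p.2) • d i = 0 := by
        rw [← hs3]
        refine (Finset.sum_subset (Finset.subset_univ S) ?_).symm
        intro i _ hi
        rw [h2 i hi, sub_self, zero_smul]
      have hs1 : ∑ i, p.1 i • d i = 0 := by
        have : ∑ i, (p.1 i - p.2) • d i = ∑ i, p.1 i • d i - p.2 • ∑ i, d i := by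
          rw [Finset.smul_sum, ← Finset.sum_sub_distrib]
          congr 1; funext i; rw [sub_smul]
        rw [this, hsum0, smul_zero, sub_zero] at hs2
        exact hs2
      refine ⟨?_, fun i hi => h2 i ((hshort i).mp hi)⟩
      intro t
      have := congrFun hs1 t
      simpa using this
  -- linear equivalence
  have e : V ≃ₗ[ℝ] ↥(LinearMap.ker φ) × ℝ :=
    { toFun := fun p => (⟨(fun i : ↥S => p.1.1 i - p.1.2), ((hmem p.1).mp p.2).1⟩, p.1.2)
      invFun := fun q => ⟨((fun j => (if h : j ∈ S then (q.1 : ↥S → ℝ) ⟨j, h⟩ else 0) + q.2),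
          q.2), by
        refine (hmem _).mpr ⟨?_, ?_⟩
        · have : (fun i : ↥S =>
              ((if h : (i : Fin n) ∈ S then (q.1 : ↥S → ℝ) ⟨i, h⟩ else 0) + q.2) - q.2)
              = (q.1 : ↥S → ℝ) := by
            funext i; simp [i.2]
          rw [this]; exact q.1.2
        · intro i hi; simp [hi]⟩
      left_inv := by
        rintro ⟨p, hp⟩
        apply Subtype.ext
        apply Prod.ext
        · funext j
          by_cases hj : j ∈ S
          · simp [hj]
          · simp [hj, ((hmem p).mp hp).2 j hj]
        · rfl
      right_inv := by
        rintro ⟨⟨u, hu⟩, s⟩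
        apply Prod.ext
        · apply Subtype.ext; funext i; simp [i.2]
        · rfl
      map_add' := by
        rintro ⟨p, hp⟩ ⟨q, hq⟩
        apply Prod.ext
        · apply Subtype.ext; funext i; simp; ring
        · rfl
      map_smul' := by
        rintro c ⟨p, hp⟩
        apply Prod.ext
        · apply Subtype.ext; funext i; simp; ring
        · rfl }
  have hrankV : Module.finrank ℝ V
      = Module.finrank ℝ (LinearMap.ker φ) + 1 := by
    rw [e.finrank_eq, Module.finrank_prod, Module.finrank_self]
  have hdom : Module.finrank ℝ (↥S → ℝ) = S.card := by
    rw [Module.finrank_fintype_fun_eq_card, Fintype.card_coe]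
  have hker : Module.finrank ℝ (LinearMap.ker φ) = S.card - 2 := by
    by_cases hc : 2 ≤ S.card
    · have hr : LinearMap.range φ = ⊤ := by
        rw [← top_le_iff, ← hspan hc, Submodule.span_le]
        rintro x ⟨i, hi, rfl⟩
        have hiS : i ∈ S := (hmemS i).mpr hi
        refine ⟨Pi.single (⟨i, hiS⟩ : ↥S) 1, ?_⟩
        simp only [hφ, LinearMap.coe_mk, AddHom.coe_mk, Pi.single_apply]
        change ∑ j : ↥S, (Pi.single (M := fun _ : ↥S => ℝ) (⟨i, hiS⟩ : ↥S) (1:ℝ)) j • d j = d i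
        rw [Finset.sum_eq_single (⟨i, hiS⟩ : ↥S)]
        · simp
        · intro b _ hb; simp [hb]
        · intro h; simp at h
      have := LinearMap.finrank_range_add_finrank_ker φ
      rw [hr, finrank_top, hdom] at this
      have h2 : Module.finrank ℝ (Fin 2 → ℝ) = 2 := by
        simp [Module.finrank_fintype_fun_eq_card]
      rw [h2] at this
      omega
    · have hle : Module.finrank ℝ (LinearMap.ker φ) ≤ S.card := by
        rw [← hdom]; exact Submodule.finrank_le _
      have hker0 : Module.finrank ℝ (LinearMap.ker φ) = 0 := by
        interval_cases h : S.card
        · omega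
        · -- S.card = 1
          have hcard : Fintype.card ↥S = 1 := by rw [Fintype.card_coe]; omega
          obtain ⟨i0, hi0⟩ := Fintype.card_eq_one_iff.mp hcard
          have : LinearMap.ker φ = ⊥ := by
            rw [Submodule.eq_bot_iff]
            intro u hu
            simp only [hφ, LinearMap.mem_ker, LinearMap.coe_mk, AddHom.coe_mk] at hu
            change ∑ i : ↥S, u i • d i = 0 at hu
            have huniv : (Finset.univ : Finset ↥S) = {i0} := by
              apply Finset.eq_singleton_iff_unique_mem.mpr
              exact ⟨Finset.mem_univ _, fun x _ => hi0 x⟩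
            rw [huniv, Finset.sum_singleton] at hu
            have := (smul_eq_zero.mp hu).resolve_right (hd0 i0)
            funext i
            rw [hi0 i]; exact this
          rw [this, finrank_bot]
      omega
  rw [hrankV, hker]
  have : max 0 (S.card - 2) = S.card - 2 := Nat.zero_max _
  rw [this]
  omega
end
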